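/- Let S, S̃ be subspaces of ℝ^n of dimension n−d (with d ≤ n), and let W, W̃ ∈ ℝ^{d×n} be matrices of full rank d with ker W = S and ker W̃ = S̃. Then the following are equivalent: (1) sign(S) ∩ sign(S̃⊥) = {0}; (2) the products det(W_I)·det(W̃_I) over all subsets I ⊆ {1,…,n} of cardinality d are either all ≥ 0 or all ≤ 0, and det(W_I)·det(W̃_I) ≠ 0 for at least one such subset I. -/

import Mathlib

open scoped BigOperators

noncomputable section

/-- The generalized exponential map `F_c(x) = ∑ i, c_i exp(w̃^i · x) w^i`. -/
def Fmap {d dt n : ℕ} (W : Matrix (Fin d) (Fin n) ℝ) (Wt : Matrix (Fin dt) (Fin n) ℝ)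
    (c : Fin n → ℝ) (x : Fin dt → ℝ) : Fin d → ℝ :=
  fun i => ∑ j, c j * Real.exp (∑ k, Wt k j * x k) * W i j

/-- The polyhedral cone generated by the columns of `W`. -/
def coneOf {d n : ℕ} (W : Matrix (Fin d) (Fin n) ℝ) : Set (Fin d → ℝ) :=
  {y | ∃ u : Fin n → ℝ, (∀ j, 0 ≤ u j) ∧ y = fun i => ∑ j, u j * W i j}

/-- The componentwise sign vector. -/
def signVec {n : ℕ} (x : Fin n → ℝ) : Fin n → SignType := fun i => SignType.sign (x i)

/-- The set of sign vectors of a set of real vectors. -/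
def signSet {n : ℕ} (T : Set (Fin n → ℝ)) : Set (Fin n → SignType) := signVec '' T

/-- The kernel of (the linear map given by) a matrix, as a set. -/
def kerSet {d n : ℕ} (W : Matrix (Fin d) (Fin n) ℝ) : Set (Fin n → ℝ) :=
  {x | W.mulVec x = 0}

/-- The orthogonal complement (w.r.t. the standard inner product) of a set in `ℝ^n`. -/
def orthSet {n : ℕ} (T : Set (Fin n → ℝ)) : Set (Fin n → ℝ) :=
  {v | ∀ u ∈ T, ∑ i, u i * v i = 0}

/-- The `d×d` minor of a `d×n` matrix given by a choice `f` of `d` columns. -/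
def minor {d n : ℕ} (W : Matrix (Fin d) (Fin n) ℝ) (f : Fin d → Fin n) : ℝ :=
  (W.submatrix id f).det

namespace Stmt3Aux

open Finset Matrix Equiv

variable {d n : ℕ}

lemma det_mul_expand (A : Matrix (Fin d) (Fin n) ℝ) (C : Matrix (Fin n) (Fin d) ℝ) :
    (A * C).det = ∑ g : Fin d → Fin n, (∏ i, C (g i) i) * (A.submatrix id g).det := by
  simp only [Matrix.det_apply, Matrix.mul_apply, Finset.prod_univ_sum, Fintype.piFinset_univ,
    Finset.smul_sum]
  rw [Finset.sum_comm]
  refine Finset.sum_congr rfl fun g _ => ?_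
  rw [Finset.mul_sum]
  refine Finset.sum_congr rfl fun σ _ => ?_
  simp only [Matrix.submatrix_apply, id_eq, Finset.prod_mul_distrib, Units.smul_def,
    zsmul_eq_mul]
  ring

lemma sum_injective_pairs (u : (Fin d → Fin n) → ℝ) :
    ∑ g ∈ Finset.univ.filter (fun g : Fin d → Fin n => Function.Injective g), u g
    = ∑ p ∈ Finset.univ.filter (fun p : (Fin d → Fin n) × Perm (Fin d) => StrictMono p.1),
        u (p.1 ∘ p.2) := by
  refine Finset.sum_nbij' (i := fun g => (g ∘ Tuple.sort g, (Tuple.sort g)⁻¹))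
    (j := fun p => p.1 ∘ p.2) ?_ ?_ ?_ ?_ ?_
  · intro g hg
    simp only [Finset.mem_filter, Finset.mem_univ, true_and] at hg ⊢
    exact (Tuple.monotone_sort g).strictMono_of_injective
      (hg.comp (Tuple.sort g).injective)
  · intro p hp
    simp only [Finset.mem_filter, Finset.mem_univ, true_and] at hp ⊢
    exact hp.injective.comp p.2.injective
  · intro g hg
    simp only [Finset.mem_filter, Finset.mem_univ, true_and] at hg
    funext x
    simp [Equiv.Perm.inv_def]
  · rintro ⟨f, π⟩ hp
    simp only [Finset.mem_filter, Finset.mem_univ, true_and] at hp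
    have hinj : Function.Injective (f ∘ π) := hp.injective.comp π.injective
    have hsort : Tuple.sort (f ∘ π) = π⁻¹ := by
      have h1 : Monotone ((f ∘ π) ∘ Tuple.sort (f ∘ π)) :=
        Tuple.monotone_sort _
      have h2 : Monotone ((f ∘ ⇑π) ∘ ⇑π⁻¹) := by
        have he : (f ∘ ⇑π) ∘ ⇑π⁻¹ = f := by
          funext x; simp
        rw [he]; exact hp.monotone
      have h3 := Tuple.unique_monotone h1 h2
      ext x
      exact congrArg Fin.val (hinj (congrFun h3 x))
    simp only [hsort]
    refine Prod.ext ?_ (inv_inv π)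
    funext x; simp
  · intro g hg
    simp only [Finset.mem_filter, Finset.mem_univ, true_and] at hg
    congr 1
    funext x
    simp [Equiv.Perm.inv_def]

theorem cauchy_binet (A : Matrix (Fin d) (Fin n) ℝ) (C : Matrix (Fin n) (Fin d) ℝ) :
    (A * C).det = ∑ f : Fin d → Fin n,
      if StrictMono f then (A.submatrix id f).det * (C.submatrix f id).det else 0 := by
  rw [det_mul_expand]
  rw [← Finset.sum_filter_add_sum_filter_not Finset.univ
    (fun g : Fin d → Fin n => Function.Injective g)]
  have hnon : ∑ g ∈ Finset.univ.filter
      (fun g : Fin d → Fin n => ¬ Function.Injective g),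
      (∏ i, C (g i) i) * (A.submatrix id g).det = 0 := by
    refine Finset.sum_eq_zero fun g hg => ?_
    rw [Finset.mem_filter] at hg
    simp only [Finset.mem_univ, true_and, Function.Injective] at hg
    push_neg at hg
    obtain ⟨i, j, hij, hne⟩ := hg
    have : (A.submatrix id g).det = 0 :=
      Matrix.det_zero_of_column_eq hne fun k => by simp [hij]
    rw [this, mul_zero]
  rw [hnon, add_zero, sum_injective_pairs]
  rw [Finset.sum_filter]
  rw [Fintype.sum_prod_type]
  refine Finset.sum_congr rfl fun f _ => ?_
  by_cases hf : StrictMono f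
  · simp only [hf, if_true]
    have key : ∀ π : Perm (Fin d),
        (∏ i, C ((f ∘ π) i) i) * (A.submatrix id (f ∘ π)).det
        = (A.submatrix id f).det * ((Perm.sign π : ℤ) • ∏ i, C (f (π i)) i) := by
      intro π
      have : A.submatrix id (f ∘ π) = (A.submatrix id f).submatrix id π := by
        simp [Matrix.submatrix_submatrix]
      rw [this, Matrix.det_permute']
      simp only [Function.comp_apply, zsmul_eq_mul]
      ring
    simp only [key, ← Finset.mul_sum]
    congr 1
    rw [Matrix.det_apply]
    refine Finset.sum_congr rfl fun π _ => ?_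
    simp [Matrix.submatrix_apply, Units.smul_def]
  · simp [hf]

lemma det_diag_expand (W Wt : Matrix (Fin d) (Fin n) ℝ) (D : Fin n → ℝ) :
    (W * Matrix.diagonal D * Wtᵀ).det
      = ∑ f : Fin d → Fin n,
          if StrictMono f then (∏ i, D (f i)) * (minor W f * minor Wt f) else 0 := by
  rw [Matrix.mul_assoc, cauchy_binet]
  refine Finset.sum_congr rfl fun f _ => ?_
  by_cases hf : StrictMono f
  · simp only [hf, if_true]
    have hC : (Matrix.diagonal D * Wtᵀ).submatrix f id
        = Matrix.diagonal (D ∘ f) * (Wtᵀ.submatrix f id) := by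
      ext i j
      simp [Matrix.submatrix_apply, Matrix.diagonal_mul]
    rw [hC, Matrix.det_mul, Matrix.det_diagonal]
    have hT : Wtᵀ.submatrix f id = (Wt.submatrix id f)ᵀ := by
      ext i j; simp
    rw [hT, Matrix.det_transpose]
    simp only [minor, Function.comp_apply]
    ring
  · simp [hf]

lemma injective_transpose_mulVecLin (Wt : Matrix (Fin d) (Fin n) ℝ) (hWt : Wt.rank = d) :
    Function.Injective Wtᵀ.mulVecLin := by
  rw [← LinearMap.ker_eq_bot]
  have h1 : Module.finrank ℝ (LinearMap.range Wtᵀ.mulVecLin) = d := by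
    have h := Matrix.rank_transpose Wt
    rw [hWt] at h
    simpa [Matrix.rank] using h
  have h2 := LinearMap.finrank_range_add_finrank_ker (Wtᵀ.mulVecLin)
  rw [h1, Module.finrank_fin_fun] at h2
  have h3 : Module.finrank ℝ (LinearMap.ker Wtᵀ.mulVecLin) = 0 := by omega
  exact Submodule.finrank_eq_zero.mp h3


lemma orth_easy (Wt : Matrix (Fin d) (Fin n) ℝ) (St : Submodule ℝ (Fin n → ℝ))
    (hkWt : LinearMap.ker Wt.mulVecLin = St) (y : Fin d → ℝ) :
    (Wtᵀ.mulVec y) ∈ orthSet (St : Set (Fin n → ℝ)) := by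
  intro u hu
  have hu0 : Wt.mulVec u = 0 := by
    have : u ∈ LinearMap.ker Wt.mulVecLin := by rw [hkWt]; exact hu
    simpa [Matrix.mulVecLin_apply] using this
  have : ∑ i, u i * (Wtᵀ.mulVec y) i = ∑ k, (Wt.mulVec u) k * y k := by
    simp only [Matrix.mulVec, dotProduct, Matrix.transpose_apply, Finset.sum_mul,
      Finset.mul_sum]
    rw [Finset.sum_comm]
    refine Finset.sum_congr rfl fun i _ => Finset.sum_congr rfl fun k _ => by ring
  rw [this, hu0]
  simp

lemma orth_hard (hdn : d ≤ n) (Wt : Matrix (Fin d) (Fin n) ℝ)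
    (St : Submodule ℝ (Fin n → ℝ)) (hSt : Module.finrank ℝ St = n - d)
    (hWt : Wt.rank = d) (hkWt : LinearMap.ker Wt.mulVecLin = St)
    (v : Fin n → ℝ) (hv : v ∈ orthSet (St : Set (Fin n → ℝ))) :
    v ∈ LinearMap.range Wtᵀ.mulVecLin := by
  classical
  set B' : Matrix (Fin (d+1)) (Fin n) ℝ := Matrix.of (Fin.cons v Wt) with hB'
  have hker : LinearMap.ker B'.mulVecLin = LinearMap.ker Wt.mulVecLin := by
    ext x
    simp only [LinearMap.mem_ker, Matrix.mulVecLin_apply]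
    constructor
    · intro h
      funext k
      have := congrFun h (Fin.succ k)
      simp [hB', Matrix.mulVec, Matrix.of_apply, Fin.cons_succ] at this ⊢; exact this
    · intro h
      have hxSt : x ∈ St := by
        rw [← hkWt]
        simpa [LinearMap.mem_ker, Matrix.mulVecLin_apply] using h
      funext i
      refine Fin.cases ?_ ?_ i
      · have h0 := hv x hxSt
        simp only [hB', Matrix.mulVec, dotProduct, Matrix.of_apply, Fin.cons_zero,
          Pi.zero_apply]
        rw [← h0]
        exact Finset.sum_congr rfl fun i _ => mul_comm _ _
      · intro k
        have := congrFun h k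
        simp [hB', Matrix.mulVec, Matrix.of_apply, Fin.cons_succ] at this ⊢; exact this
  have hkfin : Module.finrank ℝ (LinearMap.ker Wt.mulVecLin) = n - d := by
    rw [hkWt, hSt]
  have hrn := LinearMap.finrank_range_add_finrank_ker (B'.mulVecLin)
  rw [hker, hkfin, Module.finrank_fin_fun] at hrn
  have hrB' : Module.finrank ℝ (LinearMap.range B'.mulVecLin) = d := by omega
  have hrankB' : B'ᵀ.rank = d := by
    rw [Matrix.rank_transpose]
    simpa [Matrix.rank] using hrB'
  have hrangeT : LinearMap.range B'ᵀ.mulVecLin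
      = Submodule.span ℝ {v} ⊔ LinearMap.range Wtᵀ.mulVecLin := by
    rw [Matrix.range_mulVecLin, Matrix.col_transpose, Matrix.range_mulVecLin,
      Matrix.col_transpose]
    have : Set.range B'.row = insert v (Set.range Wt.row) := by
      rw [hB']
      exact Fin.range_cons v Wt
    rw [this, Submodule.span_insert]
  have hfr : Module.finrank ℝ (LinearMap.range Wtᵀ.mulVecLin) = d := by
    have h := Matrix.rank_transpose Wt
    rw [hWt] at h
    simpa [Matrix.rank] using h
  have hfr' : Module.finrank ℝ (LinearMap.range B'ᵀ.mulVecLin) = d := by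
    simpa [Matrix.rank] using hrankB'
  have hle : LinearMap.range Wtᵀ.mulVecLin ≤ LinearMap.range B'ᵀ.mulVecLin := by
    rw [hrangeT]; exact le_sup_right
  have heq := Submodule.eq_of_le_of_finrank_le hle (by rw [hfr, hfr'])
  have hvmem : v ∈ LinearMap.range B'ᵀ.mulVecLin := by
    rw [hrangeT]
    exact SetLike.le_def.mp le_sup_left (Submodule.mem_span_singleton_self v)
  rwa [← heq] at hvmem

lemma bridge1 (hdn : d ≤ n) (S St : Submodule ℝ (Fin n → ℝ))
    (hSt : Module.finrank ℝ St = n - d)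
    (W Wt : Matrix (Fin d) (Fin n) ℝ) (hWt : Wt.rank = d)
    (hkW : LinearMap.ker W.mulVecLin = S) (hkWt : LinearMap.ker Wt.mulVecLin = St)
    (hdet : ∀ D : Fin n → ℝ, (∀ i, 0 < D i) → (W * Matrix.diagonal D * Wtᵀ).det ≠ 0) :
    signSet (S : Set (Fin n → ℝ)) ∩ signSet (orthSet (St : Set (Fin n → ℝ))) = {0} := by
  classical
  ext σ
  simp only [Set.mem_inter_iff, Set.mem_singleton_iff]
  constructor
  · rintro ⟨⟨x, hxS, hx⟩, ⟨v, hvO, hvs⟩⟩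
    by_contra hσ
    obtain ⟨y, hy⟩ := orth_hard hdn Wt St hSt hWt hkWt v hvO
    have hsx : ∀ i, SignType.sign (x i) = SignType.sign (v i) := fun i => by
      have h1 : SignType.sign (x i) = σ i := congrFun hx i
      have h2 : SignType.sign (v i) = σ i := congrFun hvs i
      rw [h1, h2]
    have hv0 : v ≠ 0 := by
      rintro rfl
      apply hσ; rw [← hvs]; funext i; simp [signVec]
    have hy0 : y ≠ 0 := by
      rintro rfl
      simp only [map_zero] at hy
      exact hv0 hy.symm
    set E : Fin n → ℝ := fun i => if v i = 0 then 1 else x i / v i with hE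
    have hEpos : ∀ i, 0 < E i := by
      intro i
      by_cases h : v i = 0
      · simp [hE, h]
      · simp only [hE, h, if_false]
        rcases lt_or_gt_of_ne h with hneg | hpos
        · have hx' : x i < 0 := by
            have := hsx i
            rw [sign_eq_neg_one_iff.mpr hneg] at this
            exact sign_eq_neg_one_iff.mp this
          exact div_pos_iff.mpr (Or.inr ⟨hx', hneg⟩)
        · have hx' : 0 < x i := by
            have := hsx i
            rw [sign_eq_one_iff.mpr hpos] at this
            exact sign_eq_one_iff.mp this
          exact div_pos hx' hpos
    have hEv : (fun i => E i * v i) = x := by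
      funext i
      by_cases h : v i = 0
      · have hx0 : x i = 0 := by
          have := hsx i
          rw [h] at this; simp only [sign_zero] at this
          exact sign_eq_zero_iff.mp this
        simp [hE, h, hx0]
      · simp only [hE, h, if_false]
        exact div_mul_cancel₀ (x i) h
    have hWx : W.mulVec x = 0 := by
      have : x ∈ LinearMap.ker W.mulVecLin := by rw [hkW]; exact hxS
      simpa [Matrix.mulVecLin_apply] using this
    have hmv : (W * Matrix.diagonal E * Wtᵀ).mulVec y = 0 := by
      rw [← Matrix.mulVec_mulVec, ← Matrix.mulVec_mulVec]
      have hyv : Wtᵀ.mulVec y = v := hy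
      rw [hyv]
      have hdv : (Matrix.diagonal E).mulVec v = x := by
        funext i
        rw [Matrix.mulVec_diagonal]
        exact congrFun hEv i
      rw [hdv, hWx]
    exact hdet E hEpos (Matrix.exists_mulVec_eq_zero_iff.mp ⟨y, hy0, hmv⟩)
  · rintro rfl
    refine ⟨⟨0, S.zero_mem, ?_⟩, ⟨0, fun u _ => by simp, ?_⟩⟩ <;>
      (funext i; simp [signVec])

lemma bridge2 (S St : Submodule ℝ (Fin n → ℝ))
    (W Wt : Matrix (Fin d) (Fin n) ℝ) (hWt : Wt.rank = d)
    (hkW : LinearMap.ker W.mulVecLin = S) (hkWt : LinearMap.ker Wt.mulVecLin = St)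
    (h : signSet (S : Set (Fin n → ℝ)) ∩ signSet (orthSet (St : Set (Fin n → ℝ))) = {0}) :
    ∀ D : Fin n → ℝ, (∀ i, 0 < D i) → (W * Matrix.diagonal D * Wtᵀ).det ≠ 0 := by
  classical
  intro D hD hdet0
  obtain ⟨y, hy0, hmv⟩ := Matrix.exists_mulVec_eq_zero_iff.mpr hdet0
  have hvne : Wtᵀ.mulVec y ≠ 0 := by
    intro h0
    apply hy0
    have h2 : Wtᵀ.mulVecLin y = Wtᵀ.mulVecLin 0 := by
      rw [map_zero]; exact h0
    exact injective_transpose_mulVecLin Wt hWt h2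
  have hdv : Matrix.diagonal D *ᵥ (Wtᵀ *ᵥ y) = fun i => D i * (Wtᵀ *ᵥ y) i :=
    funext fun i => Matrix.mulVec_diagonal D (Wtᵀ *ᵥ y) i
  have hWx : W *ᵥ (fun i => D i * (Wtᵀ *ᵥ y) i) = 0 := by
    rw [← hdv, Matrix.mulVec_mulVec, Matrix.mulVec_mulVec, hmv]
  have hxS : (fun i => D i * (Wtᵀ *ᵥ y) i) ∈ S := by
    rw [← hkW]
    simpa [LinearMap.mem_ker, Matrix.mulVecLin_apply] using hWx
  have hvO : Wtᵀ *ᵥ y ∈ orthSet (St : Set (Fin n → ℝ)) := orth_easy Wt St hkWt y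
  have hsign : signVec (fun i => D i * (Wtᵀ *ᵥ y) i) = signVec (Wtᵀ *ᵥ y) := by
    funext i
    simp only [signVec]
    rw [sign_mul, sign_pos (hD i), one_mul]
  have hmem : signVec (fun i => D i * (Wtᵀ *ᵥ y) i) ∈ signSet (S : Set (Fin n → ℝ)) ∩
      signSet (orthSet (St : Set (Fin n → ℝ))) :=
    ⟨⟨_, hxS, rfl⟩, ⟨_, hvO, hsign.symm⟩⟩
  rw [h, Set.mem_singleton_iff] at hmem
  obtain ⟨i, hi⟩ := Function.ne_iff.mp hvne
  have h0 : SignType.sign (D i * (Wtᵀ *ᵥ y) i) = 0 := congrFun hmem i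
  rw [sign_eq_zero_iff] at h0
  exact (mul_ne_zero (ne_of_gt (hD i)) hi) h0

def Fsum (m : (Fin d → Fin n) → ℝ) (D : Fin n → ℝ) : ℝ :=
  ∑ f : Fin d → Fin n, if StrictMono f then (∏ i, D (f i)) * m f else 0

lemma continuous_Fsum (m : (Fin d → Fin n) → ℝ) : Continuous (Fsum m) := by
  unfold Fsum
  refine continuous_finset_sum _ fun f _ => ?_
  by_cases hf : StrictMono f
  · simp only [hf, if_true]
    exact (continuous_finset_prod _ fun i _ => continuous_apply (f i)).mul continuous_const
  · simp only [hf, if_false]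
    exact continuous_const

lemma Fsum_indicator (m : (Fin d → Fin n) → ℝ) (f : Fin d → Fin n) (hf : StrictMono f) :
    Fsum m (fun i => if i ∈ Finset.image f Finset.univ then (1 : ℝ) else 0) = m f := by
  classical
  unfold Fsum
  have hcard : (Finset.image f Finset.univ).card = d := by
    rw [Finset.card_image_of_injective _ hf.injective, Finset.card_univ, Fintype.card_fin]
  rw [Fintype.sum_eq_single f]
  · simp only [hf, if_true]
    have : ∀ i : Fin d, (if f i ∈ Finset.image f Finset.univ then (1:ℝ) else 0) = 1 := by
      intro i
      simp [Finset.mem_image_of_mem f (Finset.mem_univ i)]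
    rw [Finset.prod_congr rfl fun i _ => this i]
    simp
  · intro f' hf'
    by_cases hsm : StrictMono f'
    · simp only [hsm, if_true]
      have hex : ∃ i, f' i ∉ Finset.image f Finset.univ := by
        by_contra hall
        push_neg at hall
        have h1 : f' = (Finset.image f Finset.univ).orderEmbOfFin hcard :=
          Finset.orderEmbOfFin_unique hcard hall hsm
        have h2 : f = (Finset.image f Finset.univ).orderEmbOfFin hcard :=
          Finset.orderEmbOfFin_unique hcard
            (fun x => Finset.mem_image_of_mem f (Finset.mem_univ x)) hf
        exact hf' (h1.trans h2.symm)
      obtain ⟨i₀, hi₀⟩ := hex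
      rw [Finset.prod_eq_zero (Finset.mem_univ i₀) (by simp [hi₀]), zero_mul]
    · simp [hsm]

lemma exists_Dpos (m : (Fin d → Fin n) → ℝ) (f : Fin d → Fin n) (hf : StrictMono f)
    (hm : m f ≠ 0) :
    ∃ D : Fin n → ℝ, (∀ i, 0 < D i) ∧ 0 < Fsum m D * m f := by
  classical
  set s := Finset.image f Finset.univ with hs
  have hG : Continuous (fun ε : ℝ => Fsum m (fun i => if i ∈ s then 1 else ε) * m f) := by
    refine (Continuous.mul ?_ continuous_const)
    refine (continuous_Fsum m).comp (continuous_pi fun i => ?_)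
    by_cases h : i ∈ s
    · simp only [h, if_true]; exact continuous_const
    · simp only [h, if_false]; exact continuous_id
  have hG0 : (fun ε : ℝ => Fsum m (fun i => if i ∈ s then 1 else ε) * m f) 0 = m f * m f := by
    simp only
    rw [Fsum_indicator m f hf]
  have h0pos : (0:ℝ) < m f * m f := mul_self_pos.mpr hm
  have hev : ∀ᶠ ε in nhds (0:ℝ),
      (fun ε : ℝ => Fsum m (fun i => if i ∈ s then 1 else ε) * m f) ε ∈ Set.Ioi (0:ℝ) := by
    refine hG.continuousAt.preimage_mem_nhds ?_
    have := hG0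
    simp only at this
    rw [this]
    exact Ioi_mem_nhds h0pos
  obtain ⟨δ, hδpos, hδ⟩ := Metric.eventually_nhds_iff.mp hev
  refine ⟨fun i => if i ∈ s then 1 else δ/2, fun i => ?_, ?_⟩
  · by_cases h : i ∈ s <;> simp [h] <;> linarith
  · have : dist (δ/2) (0:ℝ) < δ := by
      rw [Real.dist_eq, sub_zero, abs_of_pos (by linarith)]
      linarith
    exact hδ this

lemma convex_pos {a b t : ℝ} (ha : 0 < a) (hb : 0 < b) (h0 : 0 ≤ t) (h1 : t ≤ 1) :
    0 < (1 - t) * a + t * b := by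
  rcases eq_or_lt_of_le h1 with rfl | hlt
  · simpa using hb
  · have : 0 < (1 - t) * a := mul_pos (by linarith) ha
    nlinarith

lemma exists_D_zero (m : (Fin d → Fin n) → ℝ)
    (h : ¬ (((∀ f : Fin d → Fin n, StrictMono f → 0 ≤ m f) ∨
      (∀ f : Fin d → Fin n, StrictMono f → m f ≤ 0)) ∧
     (∃ f : Fin d → Fin n, StrictMono f ∧ m f ≠ 0))) :
    ∃ D : Fin n → ℝ, (∀ i, 0 < D i) ∧ Fsum m D = 0 := by
  classical
  by_cases hE : ∃ f : Fin d → Fin n, StrictMono f ∧ m f ≠ 0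
  · have hno : ¬ ((∀ f : Fin d → Fin n, StrictMono f → 0 ≤ m f) ∨
        (∀ f : Fin d → Fin n, StrictMono f → m f ≤ 0)) := fun hor => h ⟨hor, hE⟩
    push_neg at hno
    obtain ⟨⟨g, hg, hgneg⟩, ⟨f, hf, hfpos⟩⟩ := hno
    obtain ⟨D₁, hD₁pos, hD₁⟩ := exists_Dpos m f hf (ne_of_gt hfpos)
    obtain ⟨D₂, hD₂pos, hD₂⟩ := exists_Dpos m g hg (ne_of_lt hgneg)
    have h1 : 0 < Fsum m D₁ := by
      rcases mul_pos_iff.mp hD₁ with ⟨ha, _⟩ | ⟨_, hb⟩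
      · exact ha
      · linarith
    have h2 : Fsum m D₂ < 0 := by
      rcases mul_pos_iff.mp hD₂ with ⟨_, hb⟩ | ⟨ha, _⟩
      · linarith
      · exact ha
    set φ : ℝ → ℝ := fun t => Fsum m (fun i => (1-t) * D₁ i + t * D₂ i) with hφ
    have hφc : Continuous φ := by
      refine (continuous_Fsum m).comp (continuous_pi fun i => ?_)
      exact ((continuous_const.sub continuous_id).mul continuous_const).add
        (continuous_id.mul continuous_const)
    have hφ0 : φ 0 = Fsum m D₁ := by
      simp only [hφ]
      congr 1
      funext i; ring
    have hφ1 : φ 1 = Fsum m D₂ := by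
      simp only [hφ]
      congr 1
      funext i; ring
    have hmem : (0:ℝ) ∈ Set.Icc (φ 1) (φ 0) := by
      rw [hφ0, hφ1]
      exact ⟨le_of_lt h2, le_of_lt h1⟩
    obtain ⟨t, ht, htv⟩ := intermediate_value_Icc' zero_le_one hφc.continuousOn hmem
    exact ⟨fun i => (1-t) * D₁ i + t * D₂ i,
      fun i => convex_pos (hD₁pos i) (hD₂pos i) ht.1 ht.2, htv⟩
  · push_neg at hE
    refine ⟨fun _ => 1, fun _ => one_pos, ?_⟩
    unfold Fsum
    refine Finset.sum_eq_zero fun f _ => ?_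
    by_cases hsm : StrictMono f
    · simp [hsm, hE f hsm]
    · simp [hsm]

lemma Fsum_ne_zero (m : (Fin d → Fin n) → ℝ)
    (hsgn : (∀ f : Fin d → Fin n, StrictMono f → 0 ≤ m f) ∨
      (∀ f : Fin d → Fin n, StrictMono f → m f ≤ 0))
    (hex : ∃ f : Fin d → Fin n, StrictMono f ∧ m f ≠ 0)
    (D : Fin n → ℝ) (hD : ∀ i, 0 < D i) : Fsum m D ≠ 0 := by
  classical
  obtain ⟨f₀, hf₀, hne⟩ := hex
  have hprod : ∀ f : Fin d → Fin n, 0 < ∏ i, D (f i) := fun f =>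
    Finset.prod_pos fun i _ => hD (f i)
  rcases hsgn with hpos | hneg
  · have : 0 < Fsum m D := by
      refine Finset.sum_pos' (fun f _ => ?_) ⟨f₀, Finset.mem_univ f₀, ?_⟩
      · by_cases hsm : StrictMono f
        · simp only [hsm, if_true]
          exact mul_nonneg (le_of_lt (hprod f)) (hpos f hsm)
        · simp [hsm]
      · simp only [hf₀, if_true]
        exact mul_pos (hprod f₀) (lt_of_le_of_ne (hpos f₀ hf₀) (Ne.symm hne))
    exact ne_of_gt this
  · have : 0 < -Fsum m D := by
      have hrw : -Fsum m D = ∑ f : Fin d → Fin n,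
          -(if StrictMono f then (∏ i, D (f i)) * m f else 0) := by
        simp only [Fsum]
        exact (Finset.sum_neg_distrib _).symm
      rw [hrw]
      refine Finset.sum_pos' (fun f _ => ?_) ⟨f₀, Finset.mem_univ f₀, ?_⟩
      · by_cases hsm : StrictMono f
        · simp only [hsm, if_true]
          nlinarith [hprod f, hneg f hsm]
        · simp [hsm]
      · simp only [hf₀, if_true]
        nlinarith [hprod f₀, lt_of_le_of_ne (hneg f₀ hf₀) hne]
    intro h0; rw [h0] at this; simp at this

end Stmt3Aux

/-- for subspaces `S, S̃` of dimension `n - d` and matrices `W, W̃` of full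
rank `d` with kernels `S, S̃`: `sign(S) ∩ sign(S̃⊥) = {0}` iff the products of maximal
minors are all `≥ 0` or all `≤ 0`, and nonzero for at least one choice of columns. -/
theorem stmt3 {d n : ℕ} (hdn : d ≤ n)
    (S St : Submodule ℝ (Fin n → ℝ))
    (hS : Module.finrank ℝ S = n - d) (hSt : Module.finrank ℝ St = n - d)
    (W Wt : Matrix (Fin d) (Fin n) ℝ) (hW : W.rank = d) (hWt : Wt.rank = d)
    (hkW : LinearMap.ker W.mulVecLin = S) (hkWt : LinearMap.ker Wt.mulVecLin = St) :
    signSet (S : Set (Fin n → ℝ)) ∩ signSet (orthSet (St : Set (Fin n → ℝ))) = {0} ↔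
    (((∀ f : Fin d → Fin n, StrictMono f → 0 ≤ minor W f * minor Wt f) ∨
      (∀ f : Fin d → Fin n, StrictMono f → minor W f * minor Wt f ≤ 0)) ∧
     (∃ f : Fin d → Fin n, StrictMono f ∧ minor W f * minor Wt f ≠ 0)) := by
  constructor
  · intro h
    by_contra hn
    obtain ⟨D, hDpos, hD0⟩ := Stmt3Aux.exists_D_zero (fun f => minor W f * minor Wt f) hn
    exact Stmt3Aux.bridge2 S St W Wt hWt hkW hkWt h D hDpos
      (by rw [Stmt3Aux.det_diag_expand]; simpa [Stmt3Aux.Fsum] using hD0)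
  · intro hrhs
    refine Stmt3Aux.bridge1 hdn S St hSt W Wt hWt hkW hkWt ?_
    intro D hD
    rw [Stmt3Aux.det_diag_expand]
    have hne := Stmt3Aux.Fsum_ne_zero (fun f => minor W f * minor Wt f) hrhs.1 hrhs.2 D hD
    simpa [Stmt3Aux.Fsum] using hne
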